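/- Let Â^(1),...,Â^(R) and A^(1),...,A^(R) be L×L matrices with nonnegative entries and let P be an L×L column-stochastic matrix with Â^(r) P = A^(r) for each r. Suppose the average Â* = (1/R)∑_r Â^(r) satisfies Â*_ii > Â*_ij for all j ≠ i, and trace(Â*) = trace(A*) where A* = (1/R)∑_r A^(r). Then P is the identity matrix and Â^(r) = A^(r) for every r ∈ {1,...,R}. -/
import Mathlib


theorem stmt_5 {L R : ℕ} (hR : 0 < R)
    (Ahat A : Fin R → Matrix (Fin L) (Fin L) ℝ) (P : Matrix (Fin L) (Fin L) ℝ)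
    (hAhat : ∀ r i j, 0 ≤ Ahat r i j) (hA : ∀ r i j, 0 ≤ A r i j)
    (hPnn : ∀ i j, 0 ≤ P i j) (hPs : ∀ i, ∑ j, P j i = 1)
    (hEq : ∀ r, Ahat r * P = A r)
    (hDD : ∀ i j, j ≠ i →
      ((R : ℝ)⁻¹ • ∑ r, Ahat r) i j < ((R : ℝ)⁻¹ • ∑ r, Ahat r) i i)
    (hTr : Matrix.trace ((R : ℝ)⁻¹ • ∑ r, Ahat r)
         = Matrix.trace ((R : ℝ)⁻¹ • ∑ r, A r)) :
    P = 1 ∧ ∀ r, Ahat r = A r := by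
  set B : Matrix (Fin L) (Fin L) ℝ := (R : ℝ)⁻¹ • ∑ r, Ahat r with hB
  have hBP : B * P = (R : ℝ)⁻¹ • ∑ r, A r := by
    rw [hB, Matrix.smul_mul, Finset.sum_mul]
    congr 1
    exact Finset.sum_congr rfl fun r _ => hEq r
  have hTr' : Matrix.trace B = Matrix.trace (B * P) := by rw [hBP]; exact hTr
  have hrow : ∀ i, ∑ k, (B i i - B i k) * P k i = B i i - (B * P) i i := by
    intro i
    have : ∑ k, (B i i - B i k) * P k i
        = (∑ k, B i i * P k i) - ∑ k, B i k * P k i := by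
      rw [← Finset.sum_sub_distrib]
      exact Finset.sum_congr rfl fun k _ => by ring
    rw [this, ← Finset.mul_sum, hPs i, mul_one, Matrix.mul_apply]
  have key : ∑ i, ∑ k, (B i i - B i k) * P k i = 0 := by
    rw [Finset.sum_congr rfl fun i _ => hrow i, Finset.sum_sub_distrib]
    have h1 : Matrix.trace B = ∑ i, B i i := rfl
    have h2 : Matrix.trace (B * P) = ∑ i, (B * P) i i := rfl
    rw [← h1, ← h2, hTr', sub_self]
  have hterm_nonneg : ∀ i k, 0 ≤ (B i i - B i k) * P k i := by
    intro i k
    apply mul_nonneg _ (hPnn k i)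
    rcases eq_or_ne k i with h | h
    · simp [h]
    · linarith [hDD i k h]
  have hzero : ∀ i k, (B i i - B i k) * P k i = 0 := by
    intro i k
    have h1 := (Finset.sum_eq_zero_iff_of_nonneg
      (fun i _ => Finset.sum_nonneg fun k _ => hterm_nonneg i k)).mp key i
      (Finset.mem_univ i)
    exact (Finset.sum_eq_zero_iff_of_nonneg
      (fun k _ => hterm_nonneg i k)).mp h1 k (Finset.mem_univ k)
  have hP0 : ∀ i k, k ≠ i → P k i = 0 := by
    intro i k hk
    have hpos : 0 < B i i - B i k := by linarith [hDD i k hk]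
    have := hzero i k
    rcases mul_eq_zero.mp this with h | h
    · exact absurd h (ne_of_gt hpos)
    · exact h
  have hP1 : P = 1 := by
    ext k i
    rcases eq_or_ne k i with h | h
    · subst h
      have := hPs k
      rw [Finset.sum_eq_single k (fun j _ hj => hP0 k j hj) (by simp)] at this
      simp [this]
    · simp [hP0 i k h, Matrix.one_apply, h]
  refine ⟨hP1, fun r => ?_⟩
  rw [← hEq r, hP1, mul_one]
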